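/- For every $i\in\{0,\dots,c(n)-1\}$, the retraction $\phi_{n,i}:D_n\to M_{n,i}$ is $(2\lambda^2+4\lambda+4)$-Lipschitz. -/

import Mathlib

open Set

noncomputable section

variable {Γ : Type*} [TopologicalSpace Γ] [DiscreteTopology Γ]

/-- `ℓ∞(Γ)`: the Banach space of bounded real functions on `Γ`
(carrying the discrete topology, so that boundedness is the only constraint). -/
abbrev Linf (Γ : Type*) [TopologicalSpace Γ] [DiscreteTopology Γ] : Type _ :=
  BoundedContinuousFunction Γ ℝ

/-- The entire part of a real number, toward `0`: `[r] = sign(r)⌊|r|⌋`. -/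
def ent (r : ℝ) : ℝ := Real.sign r * ⌊|r|⌋

lemma abs_ent_le (r : ℝ) : |ent r| ≤ |r| := by
  have hsign : |Real.sign r| ≤ 1 := by
    rcases lt_trichotomy r 0 with h | h | h
    · rw [Real.sign_of_neg h]; norm_num
    · rw [h, Real.sign_zero]; norm_num
    · rw [Real.sign_of_pos h]; norm_num
  have hfl : |(⌊|r|⌋ : ℝ)| ≤ |r| := by
    rw [abs_of_nonneg (by exact_mod_cast Int.floor_nonneg.mpr (abs_nonneg r))]
    exact Int.floor_le _
  calc |ent r| = |Real.sign r| * |(⌊|r|⌋ : ℝ)| := abs_mul _ _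
    _ ≤ 1 * |r| := mul_le_mul hsign hfl (abs_nonneg _) zero_le_one
    _ = |r| := one_mul _

/-- The coordinatewise quantization `f : ℓ∞(S) → ℓ∞(S)`, `f(x)(γ) = [x(γ)]`. -/
def quant (x : Linf Γ) : Linf Γ :=
  BoundedContinuousFunction.ofNormedAddCommGroup (fun γ => ent (x γ))
    continuous_of_discreteTopology ‖x‖ (fun γ => by
      rw [Real.norm_eq_abs]
      exact (abs_ent_le (x γ)).trans (by simpa using x.norm_coe_le_norm γ))

/-- Scalar truncation at level `s`. -/
def truncFun (s t : ℝ) : ℝ := if |t| ≤ s then t else s * t / |t|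

lemma abs_truncFun_le (s t : ℝ) : |truncFun s t| ≤ max |s| |t| := by
  unfold truncFun
  split_ifs with h
  · exact le_max_right _ _
  · by_cases ht : t = 0
    · simp [ht]
    · have hst : abs (s * t / |t|) = |s| := by
        rw [abs_div, abs_mul, abs_abs, mul_div_assoc, div_self (abs_ne_zero.mpr ht), mul_one]
      rw [hst]; exact le_max_left _ _

/-- The truncation of radius `s`: `T_s(x)(γ) = x(γ)` if `|x(γ)| ≤ s`,
and `= s·x(γ)/|x(γ)|` otherwise. -/
def trunc (s : ℝ) (x : Linf Γ) : Linf Γ :=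
  BoundedContinuousFunction.ofNormedAddCommGroup (fun γ => truncFun s (x γ))
    continuous_of_discreteTopology (max |s| ‖x‖) (fun γ => by
      rw [Real.norm_eq_abs]
      exact (abs_truncFun_le s (x γ)).trans
        (max_le_max le_rfl (by simpa using x.norm_coe_le_norm γ)))

/-- The restriction operator `r_S : ℓ∞(Γ) → ℓ∞(S)`, where `ℓ∞(S)` is identified
isometrically with the subspace of `ℓ∞(Γ)` of functions vanishing off `S`. -/
def restr (S : Set Γ) (x : Linf Γ) : Linf Γ :=
  BoundedContinuousFunction.ofNormedAddCommGroup (S.indicator x)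
    continuous_of_discreteTopology ‖x‖ (fun γ => by
      rw [Real.norm_eq_abs]
      by_cases h : γ ∈ S
      · rw [Set.indicator_of_mem h]
        simpa using x.norm_coe_le_norm γ
      · rw [Set.indicator_of_notMem h]
        simp)

/-- The ball `s·B_{ℓ∞(S)}`, viewed inside `ℓ∞(Γ)`: functions supported on `S`
of norm at most `s`. -/
def suppBall (S : Set Γ) (s : ℝ) : Set (Linf Γ) :=
  {x | (∀ γ ∉ S, x γ = 0) ∧ ‖x‖ ≤ s}

/-- `chain T a b = T (a+1) ∘ ⋯ ∘ T b` (the identity if `b ≤ a`). -/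
def chain {α : Type*} (T : ℕ → α → α) (a b : ℕ) : α → α :=
  Nat.rec id (fun k ih => ih ∘ T (a + k + 1)) (b - a)

/-- Bourgain–Delbaen data on `Γ`: a strictly increasing sequence of nonempty finite
sets `Γs n` (for `n ≥ 1`) with union `Γ`, together with compatible bounded linear
extension operators `i n : ℓ∞(Γ_n) → ℓ∞(Γ)` (realized as operators on `ℓ∞(Γ)`
factoring through the restriction `restr (Γs n)`), with norms bounded by the
positive integer `lam`. -/
structure BD (Γ : Type*) [TopologicalSpace Γ] [DiscreteTopology Γ] where
  Γs : ℕ → Set Γ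
  lam : ℕ
  i : ℕ → Linf Γ →L[ℝ] Linf Γ
  one_le_lam : 1 ≤ lam
  finite : ∀ n, 1 ≤ n → (Γs n).Finite
  nonempty : ∀ n, 1 ≤ n → (Γs n).Nonempty
  ssubset : ∀ n, 1 ≤ n → Γs n ⊂ Γs (n + 1)
  iUnion_eq : ⋃ n ∈ {k : ℕ | 1 ≤ k}, Γs n = Set.univ
  extension : ∀ n, 1 ≤ n → ∀ x : Linf Γ, ∀ γ ∈ Γs n, i n x γ = x γ
  factor : ∀ n, 1 ≤ n → ∀ x : Linf Γ, i n (restr (Γs n) x) = i n x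
  compatible : ∀ n m, 1 ≤ n → n < m → ∀ x : Linf Γ, i m (restr (Γs m) (i n x)) = i n x
  norm_i_le : ∀ n, 1 ≤ n → ‖i n‖ ≤ (lam : ℝ)

namespace BD

/-- `s n = λ^n`. -/
def s (B : BD Γ) (n : ℕ) : ℝ := (B.lam : ℝ) ^ n

/-- The sets `M_n` (with `M_0 = ∅`):
`M_n = M_{n-1} ∪ (f ∘ i_n)(f(s_n B_{ℓ∞(Γ_n)}) \ r_n(M_{n-1}))`. -/
def M (B : BD Γ) : ℕ → Set (Linf Γ)
  | 0 => ∅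
  | n + 1 =>
      M B n ∪
        (fun z => quant (B.i (n + 1) z)) ''
          (quant '' suppBall (B.Γs (n + 1)) (B.s (n + 1)) \ restr (B.Γs (n + 1)) '' M B n)

/-- `M = ⋃ n, M_n`. -/
def Mtot (B : BD Γ) : Set (Linf Γ) := ⋃ n, B.M n

/-- `C_n = (f ∘ i_{n+1} ∘ f ∘ T_{s_{n+1}} ∘ r_{n+1} ∘ i_n)
(f(s_{n+1}B_{ℓ∞(Γ_n)}) \ f(s_n B_{ℓ∞(Γ_n)}))`. -/
def C (B : BD Γ) (n : ℕ) : Set (Linf Γ) :=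
  (fun z => quant (B.i (n + 1) (quant (trunc (B.s (n + 1)) (restr (B.Γs (n + 1)) (B.i n z)))))) ''
    (quant '' suppBall (B.Γs n) (B.s (n + 1)) \ quant '' suppBall (B.Γs n) (B.s n))

/-- `D_n = M_n ∪ C_n`. -/
def D (B : BD Γ) (n : ℕ) : Set (Linf Γ) := B.M n ∪ B.C n

end BD
section ScalarAux

lemma ent_zero' : ent 0 = 0 := by simp [ent]

lemma ent_intCast (k : ℤ) : ent (k : ℝ) = k := by
  unfold ent
  rcases lt_trichotomy k 0 with h | h | h
  · have h' : ((k : ℝ)) < 0 := by exact_mod_cast h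
    rw [Real.sign_of_neg h', abs_of_neg h', ← Int.cast_neg, Int.floor_intCast]
    push_cast; ring
  · subst h; simp [ent]
  · have h' : (0 : ℝ) < (k : ℝ) := by exact_mod_cast h
    rw [Real.sign_of_pos h', abs_of_pos h', Int.floor_intCast]
    ring

lemma ent_isInt (t : ℝ) : ∃ k : ℤ, ent t = (k : ℝ) := by
  unfold ent
  rcases lt_trichotomy t 0 with h | h | h
  · exact ⟨-⌊|t|⌋, by rw [Real.sign_of_neg h]; push_cast; ring⟩
  · exact ⟨0, by simp [h]⟩
  · exact ⟨⌊|t|⌋, by rw [Real.sign_of_pos h]; push_cast; ring⟩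

lemma abs_ent_sub_le (t : ℝ) : |ent t - t| ≤ 1 := by
  unfold ent
  rcases lt_trichotomy t 0 with h | h | h
  · rw [Real.sign_of_neg h, abs_of_neg h]
    have h1 := Int.floor_le (-t)
    have h2 := Int.sub_one_lt_floor (-t)
    rw [abs_le]; constructor <;> nlinarith
  · simp [h]
  · rw [Real.sign_of_pos h, abs_of_pos h]
    have h1 := Int.floor_le t
    have h2 := Int.sub_one_lt_floor t
    rw [abs_le]; constructor <;> nlinarith

lemma abs_ent_sub_ent (a b : ℝ) : |ent a - ent b| ≤ |a - b| + 2 := by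
  have h1 := abs_le.mp (abs_ent_sub_le a)
  have h2 := abs_le.mp (abs_ent_sub_le b)
  have h3 := le_abs_self (a - b)
  have h4 := neg_abs_le (a - b)
  rw [abs_le]; constructor <;> linarith

lemma truncFun_eq_clamp {s : ℝ} (hs : 0 ≤ s) (t : ℝ) :
    truncFun s t = max (-s) (min s t) := by
  unfold truncFun
  split_ifs with h
  · rw [abs_le] at h
    rw [min_eq_right h.2, max_eq_right h.1]
  · push_neg at h
    have ht' : t ≠ 0 := by
      intro h0; rw [h0, abs_zero] at h; exact absurd hs (not_le.mpr h)
    rcases le_or_gt 0 t with ht | ht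
    · rw [abs_of_nonneg ht] at h ⊢
      rw [mul_div_assoc, div_self ht', mul_one, min_eq_left h.le,
        max_eq_right (neg_le_self hs)]
    · rw [abs_of_neg ht] at h ⊢
      rw [min_eq_right (by linarith : t ≤ s), max_eq_left (by linarith : t ≤ -s),
        div_neg, mul_div_assoc, div_self ht', mul_one]

lemma truncFun_eq_self' {s t : ℝ} (h : |t| ≤ s) : truncFun s t = t := by
  unfold truncFun; rw [if_pos h]

lemma truncFun_zero' {s : ℝ} (hs : 0 ≤ s) : truncFun s 0 = 0 := by
  apply truncFun_eq_self'; simpa using hs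

lemma abs_truncFun_le' {s : ℝ} (hs : 0 ≤ s) (t : ℝ) : |truncFun s t| ≤ s := by
  rw [truncFun_eq_clamp hs, abs_le]
  exact ⟨le_max_left _ _, max_le (neg_le_self hs) (min_le_left _ _)⟩

lemma truncFun_lip {s : ℝ} (hs : 0 ≤ s) (a b : ℝ) :
    |truncFun s a - truncFun s b| ≤ |a - b| := by
  rw [truncFun_eq_clamp hs, truncFun_eq_clamp hs]
  refine le_trans (abs_max_sub_max_le_max _ _ _ _) ?_
  simp only [sub_self, abs_zero]
  refine max_le (abs_nonneg _) (le_trans (abs_min_sub_min_le_max _ _ _ _) ?_)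
  simp only [sub_self, abs_zero]
  exact max_le (abs_nonneg _) le_rfl

lemma truncFun_truncFun {s t : ℝ} (hs : 0 ≤ s) (ht : 0 ≤ t) (x : ℝ) :
    truncFun s (truncFun t x) = truncFun (min s t) x := by
  rcases le_total s t with h | h
  · rw [min_eq_left h]
    rcases le_total x t with h1 | h1
    · rcases le_total (-t) x with h2 | h2
      · rw [truncFun_eq_self' (abs_le.mpr ⟨h2, h1⟩)]
      · have e1 : truncFun t x = -t := by
          rw [truncFun_eq_clamp ht, min_eq_right (h2.trans (neg_le_self ht)),
            max_eq_left h2]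
        have e2 : truncFun s (-t) = -s := by
          rw [truncFun_eq_clamp hs, min_eq_right ((neg_nonpos.mpr ht).trans hs),
            max_eq_left (neg_le_neg h)]
        have e3 : truncFun s x = -s := by
          rw [truncFun_eq_clamp hs,
            min_eq_right ((h2.trans (neg_nonpos.mpr ht)).trans hs),
            max_eq_left (h2.trans (neg_le_neg h))]
        rw [e1, e2, e3]
    · have e1 : truncFun t x = t := by
        rw [truncFun_eq_clamp ht, min_eq_left h1, max_eq_right (neg_le_self ht)]
      have e2 : truncFun s t = s := by
        rw [truncFun_eq_clamp hs, min_eq_left h, max_eq_right (neg_le_self hs)]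
      have e3 : truncFun s x = s := by
        rw [truncFun_eq_clamp hs, min_eq_left (h.trans h1),
          max_eq_right (neg_le_self hs)]
      rw [e1, e2, e3]
  · rw [min_eq_right h]
    exact truncFun_eq_self' ((abs_truncFun_le' ht x).trans h)

lemma truncFun_key {s t : ℝ} (hs : 0 ≤ s) (hst : s ≤ t) (a b : ℝ) :
    |truncFun s a - truncFun t b| ≤ max |a - b| (t - s) := by
  have ht : 0 ≤ t := hs.trans hst
  have h1 : truncFun s a = truncFun s (truncFun t a) := by
    rw [truncFun_truncFun hs ht, min_eq_left hst]
  rw [h1]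
  set A := truncFun t a with hA
  set Bv := truncFun t b with hB
  have hAB : |A - Bv| ≤ |a - b| := truncFun_lip ht a b
  have hBt := abs_le.mp (abs_truncFun_le' ht b)
  have habs := le_abs_self (A - Bv)
  have habs' := neg_abs_le (A - Bv)
  rw [truncFun_eq_clamp hs]
  rcases le_total A s with h2 | h2
  · rcases le_total (-s) A with h3 | h3
    · rw [min_eq_right h2, max_eq_right h3]
      exact le_trans hAB (le_max_left _ _)
    · rw [min_eq_right h2, max_eq_left h3]
      rcases le_total Bv (-s) with h4 | h4
      · refine le_trans ?_ (le_max_right _ _)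
        rw [abs_le]; constructor <;> linarith
      · refine le_trans ?_ (le_max_left _ _)
        refine le_trans ?_ hAB
        rw [abs_le]; constructor <;> linarith
  · rw [min_eq_left h2, max_eq_right (neg_le_self hs)]
    rcases le_total Bv s with h4 | h4
    · refine le_trans ?_ (le_max_left _ _)
      refine le_trans ?_ hAB
      rw [abs_le]; constructor <;> linarith
    · refine le_trans ?_ (le_max_right _ _)
      rw [abs_le]; constructor <;> linarith

end ScalarAux
section LinfAux

variable {Γ : Type*} [TopologicalSpace Γ] [DiscreteTopology Γ]

lemma quant_apply (x : Linf Γ) (γ : Γ) : quant x γ = ent (x γ) := rfl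

lemma trunc_apply (s : ℝ) (x : Linf Γ) (γ : Γ) : trunc s x γ = truncFun s (x γ) := rfl

lemma restr_apply (S : Set Γ) (x : Linf Γ) (γ : Γ) : restr S x γ = S.indicator x γ := rfl

lemma restr_apply_mem {S : Set Γ} {γ : Γ} (h : γ ∈ S) (x : Linf Γ) :
    restr S x γ = x γ := by rw [restr_apply, Set.indicator_of_mem h]

lemma restr_apply_not_mem {S : Set Γ} {γ : Γ} (h : γ ∉ S) (x : Linf Γ) :
    restr S x γ = 0 := by rw [restr_apply, Set.indicator_of_notMem h]

lemma Linf.abs_le_norm (f : Linf Γ) (γ : Γ) : |f γ| ≤ ‖f‖ := by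
  rw [← Real.norm_eq_abs]; exact f.norm_coe_le_norm γ

lemma Linf.norm_le_of {f : Linf Γ} {C : ℝ} (hC : 0 ≤ C) (h : ∀ γ, |f γ| ≤ C) :
    ‖f‖ ≤ C :=
  (BoundedContinuousFunction.norm_le hC).mpr fun γ => by
    rw [Real.norm_eq_abs]; exact h γ

lemma norm_quant_le (x : Linf Γ) : ‖quant x‖ ≤ ‖x‖ :=
  Linf.norm_le_of (norm_nonneg x) fun γ =>
    (abs_ent_le (x γ)).trans (Linf.abs_le_norm x γ)

lemma norm_quant_sub_quant (x y : Linf Γ) : ‖quant x - quant y‖ ≤ ‖x - y‖ + 2 := by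
  refine Linf.norm_le_of (by positivity) fun γ => ?_
  rw [BoundedContinuousFunction.sub_apply, quant_apply, quant_apply]
  refine (abs_ent_sub_ent _ _).trans (add_le_add_left ?_ 2)
  calc |x γ - y γ| = |(x - y) γ| := by rw [BoundedContinuousFunction.sub_apply]
    _ ≤ ‖x - y‖ := Linf.abs_le_norm _ γ

lemma restr_sub (S : Set Γ) (x y : Linf Γ) :
    restr S x - restr S y = restr S (x - y) := by
  ext γ
  by_cases h : γ ∈ S
  · rw [BoundedContinuousFunction.sub_apply, restr_apply_mem h, restr_apply_mem h,
      restr_apply_mem h, BoundedContinuousFunction.sub_apply]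
  · rw [BoundedContinuousFunction.sub_apply, restr_apply_not_mem h,
      restr_apply_not_mem h, restr_apply_not_mem h, sub_zero]

lemma norm_restr_le (S : Set Γ) (x : Linf Γ) : ‖restr S x‖ ≤ ‖x‖ := by
  refine Linf.norm_le_of (norm_nonneg x) fun γ => ?_
  by_cases h : γ ∈ S
  · rw [restr_apply_mem h]; exact Linf.abs_le_norm x γ
  · rw [restr_apply_not_mem h]; simp

lemma trunc_eq_self {s : ℝ} {v : Linf Γ} (h : ‖v‖ ≤ s) : trunc s v = v := by
  ext γ
  exact truncFun_eq_self' ((Linf.abs_le_norm v γ).trans h)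

lemma trunc_trunc {s t : ℝ} (hs : 0 ≤ s) (ht : 0 ≤ t) (v : Linf Γ) :
    trunc s (trunc t v) = trunc (min s t) v := by
  ext γ
  rw [trunc_apply, trunc_apply, trunc_apply]
  exact truncFun_truncFun hs ht _

lemma norm_trunc_le {s : ℝ} (hs : 0 ≤ s) (v : Linf Γ) : ‖trunc s v‖ ≤ s :=
  Linf.norm_le_of hs fun γ => abs_truncFun_le' hs _

lemma norm_trunc_eq {e : ℝ} {v : Linf Γ} (h0 : 0 ≤ e) (h : e ≤ ‖v‖) :
    ‖trunc e v‖ = e := by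
  refine le_antisymm (norm_trunc_le h0 v) ?_
  rcases eq_or_lt_of_le h with h1 | h1
  · rw [trunc_eq_self h1.symm.le, ← h1]
  · obtain ⟨γ, hγ⟩ : ∃ γ, e < |v γ| := by
      by_contra hc
      push_neg at hc
      exact absurd (Linf.norm_le_of h0 hc) (not_le.mpr h1)
    have : |trunc e v γ| = e := by
      rw [trunc_apply, truncFun_eq_clamp h0]
      rcases le_or_gt (v γ) 0 with hv | hv
      · have : v γ ≤ -e := by
          rw [abs_of_nonpos hv] at hγ; linarith
        rw [min_eq_right (this.trans ((neg_nonpos.mpr h0).trans h0)),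
          max_eq_left this, abs_neg, abs_of_nonneg h0]
      · have : e ≤ v γ := by
          rw [abs_of_pos hv] at hγ; linarith
        rw [min_eq_left this, max_eq_right (neg_le_self h0), abs_of_nonneg h0]
    calc e = |trunc e v γ| := this.symm
      _ ≤ ‖trunc e v‖ := Linf.abs_le_norm _ γ

lemma trunc_min_norm {e : ℝ} (h0 : 0 ≤ e) (v : Linf Γ) :
    trunc e v = trunc (min e ‖v‖) v := by
  rcases le_total e ‖v‖ with h | h
  · rw [min_eq_left h]
  · rw [min_eq_right h, trunc_eq_self le_rfl, trunc_eq_self h]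

lemma norm_trunc_sub_trunc {s t : ℝ} (hs : 0 ≤ s) (ht : 0 ≤ t) (A B : Linf Γ) :
    ‖trunc s A - trunc t B‖ ≤ max ‖A - B‖ |t - s| := by
  have key : ∀ s t : ℝ, 0 ≤ s → s ≤ t → ∀ A B : Linf Γ,
      ‖trunc s A - trunc t B‖ ≤ max ‖A - B‖ |t - s| := by
    intro s t hs hst A B
    refine Linf.norm_le_of (le_max_of_le_left (norm_nonneg _)) fun γ => ?_
    rw [BoundedContinuousFunction.sub_apply, trunc_apply, trunc_apply]
    refine (truncFun_key hs hst _ _).trans (max_le_max ?_ ?_)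
    · calc |A γ - B γ| = |(A - B) γ| := by rw [BoundedContinuousFunction.sub_apply]
        _ ≤ ‖A - B‖ := Linf.abs_le_norm _ γ
    · exact le_abs_self _
  rcases le_total s t with h | h
  · exact key s t hs h A B
  · rw [norm_sub_rev, abs_sub_comm]
    refine (key t s ht h B A).trans ?_
    rw [norm_sub_rev]

def IsIntVal (v : Linf Γ) : Prop := ∀ γ, ∃ k : ℤ, v γ = (k : ℝ)

lemma isIntVal_quant (x : Linf Γ) : IsIntVal (quant x) := fun γ => ent_isInt _

lemma quant_eq_self {v : Linf Γ} (h : IsIntVal v) : quant v = v := by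
  ext γ
  obtain ⟨k, hk⟩ := h γ
  rw [quant_apply, hk, ent_intCast]

lemma isIntVal_restr (S : Set Γ) {v : Linf Γ} (h : IsIntVal v) :
    IsIntVal (restr S v) := by
  intro γ
  by_cases hγ : γ ∈ S
  · rw [restr_apply_mem hγ]; exact h γ
  · exact ⟨0, by rw [restr_apply_not_mem hγ]; simp⟩

lemma one_le_norm_sub {x y : Linf Γ} (hx : IsIntVal x) (hy : IsIntVal y)
    (hxy : x ≠ y) : 1 ≤ ‖x - y‖ := by
  obtain ⟨γ, hγ⟩ : ∃ γ, x γ ≠ y γ := by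
    by_contra hc
    push_neg at hc
    exact hxy (BoundedContinuousFunction.ext hc)
  obtain ⟨kx, hkx⟩ := hx γ
  obtain ⟨ky, hky⟩ := hy γ
  have hk : kx ≠ ky := by
    intro h; apply hγ; rw [hkx, hky, h]
  have h1 : (1 : ℝ) ≤ |(kx : ℝ) - (ky : ℝ)| := by
    have := Int.one_le_abs (sub_ne_zero.mpr hk)
    calc (1 : ℝ) ≤ ((|kx - ky| : ℤ) : ℝ) := by exact_mod_cast this
      _ = |(kx : ℝ) - (ky : ℝ)| := by push_cast; ring
  calc (1 : ℝ) ≤ |(kx : ℝ) - ky| := h1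
    _ = |(x - y) γ| := by rw [BoundedContinuousFunction.sub_apply, hkx, hky]
    _ ≤ ‖x - y‖ := Linf.abs_le_norm _ γ

end LinfAux
section BDAux

variable {Γ : Type*} [TopologicalSpace Γ] [DiscreteTopology Γ]

lemma BD.lam_one_le (B : BD Γ) : (1 : ℝ) ≤ (B.lam : ℝ) := by
  exact_mod_cast B.one_le_lam

lemma BD.one_le_s (B : BD Γ) (m : ℕ) : (1 : ℝ) ≤ B.s m :=
  one_le_pow₀ B.lam_one_le

lemma BD.s_nonneg (B : BD Γ) (m : ℕ) : (0 : ℝ) ≤ B.s m :=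
  zero_le_one.trans (B.one_le_s m)

lemma BD.s_mono (B : BD Γ) {m m' : ℕ} (h : m ≤ m') : B.s m ≤ B.s m' :=
  pow_le_pow_right₀ B.lam_one_le h

lemma BD.s_succ (B : BD Γ) (m : ℕ) : B.s (m + 1) = (B.lam : ℝ) * B.s m := by
  unfold BD.s; rw [pow_succ]; ring

lemma BD.Γs_subset (B : BD Γ) {m m' : ℕ} (h1 : 1 ≤ m) (h : m ≤ m') :
    B.Γs m ⊆ B.Γs m' := by
  induction m' with
  | zero => omega
  | succ k ih =>
    rcases Nat.lt_or_ge m (k + 1) with h' | h'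
    · have hk : 1 ≤ k := by omega
      exact (ih (by omega)).trans (B.ssubset k hk).subset
    · have : m = k + 1 := by omega
      subst this; exact subset_rfl

lemma BD.norm_i_apply_le (B : BD Γ) {m : ℕ} (h1 : 1 ≤ m) (v : Linf Γ) :
    ‖B.i m v‖ ≤ (B.lam : ℝ) * ‖v‖ :=
  ((B.i m).le_opNorm v).trans
    (mul_le_mul_of_nonneg_right (B.norm_i_le m h1) (norm_nonneg v))

/-- Witness form for points of `M k`, `k ≤ n`. -/
lemma BD.M_wit (B : BD Γ) {n : ℕ} (hn : 1 ≤ n) :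
    ∀ k, k ≤ n → ∀ z ∈ B.M k, ∃ a : Linf Γ,
      z = quant (B.i n a) ∧ (∀ γ ∉ B.Γs n, a γ = 0) ∧ ‖a‖ ≤ B.s n ∧
      (∀ γ ∈ B.Γs n, z γ = ent (a γ)) := by
  intro k
  induction k with
  | zero => intro _ z hz; exact absurd hz (by simp [BD.M])
  | succ m ih =>
    intro hm z hz
    rcases hz with hz | hz
    · exact ih (by omega) z hz
    · obtain ⟨v, hv, rfl⟩ := hz
      obtain ⟨w, hw, rfl⟩ := hv.1
      have hm1 : 1 ≤ m + 1 := by omega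
      -- properties of quant w
      have hwsupp : ∀ γ ∉ B.Γs (m + 1), quant w γ = 0 := by
        intro γ hγ
        rw [quant_apply, hw.1 γ hγ, ent_zero']
      have hwnorm : ‖quant w‖ ≤ B.s (m + 1) := (norm_quant_le w).trans hw.2
      set A := B.i (m + 1) (quant w) with hA
      set a := restr (B.Γs n) A with ha
      have hia : B.i n a = A := by
        rcases Nat.lt_or_ge (m + 1) n with hlt | hge
        · exact B.compatible (m + 1) n hm1 hlt (quant w)
        · have hmn : m + 1 = n := by omega
          subst hmn
          have : restr (B.Γs (m + 1)) A = restr (B.Γs (m + 1)) (quant w) := by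
            ext γ
            by_cases hγ : γ ∈ B.Γs (m + 1)
            · rw [restr_apply_mem hγ, restr_apply_mem hγ, hA,
                B.extension (m + 1) hm1 (quant w) γ hγ]
            · rw [restr_apply_not_mem hγ, restr_apply_not_mem hγ]
          rw [ha, this, B.factor (m + 1) hm1 (quant w)]
      refine ⟨a, by rw [hia], fun γ hγ => restr_apply_not_mem hγ A, ?_, ?_⟩
      · refine Linf.norm_le_of (B.s_nonneg n) fun γ => ?_
        by_cases hγ : γ ∈ B.Γs n
        · rw [ha, restr_apply_mem hγ]
          rcases Nat.lt_or_ge (m + 1) n with hlt | hge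
          · calc |A γ| ≤ ‖A‖ := Linf.abs_le_norm A γ
              _ ≤ (B.lam : ℝ) * ‖quant w‖ := B.norm_i_apply_le hm1 _
              _ ≤ (B.lam : ℝ) * B.s (m + 1) :=
                mul_le_mul_of_nonneg_left hwnorm
                  (zero_le_one.trans B.lam_one_le)
              _ = B.s (m + 2) := (B.s_succ (m + 1)).symm
              _ ≤ B.s n := B.s_mono (by omega)
          · have hmn : m + 1 = n := by omega
            subst hmn
            rw [hA, B.extension (m + 1) hm1 (quant w) γ hγ]
            exact (Linf.abs_le_norm _ γ).trans hwnorm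
        · rw [ha, restr_apply_not_mem hγ]
          simpa using B.s_nonneg n
      · intro γ hγ
        show quant A γ = ent (a γ)
        rw [← hia, quant_apply, B.extension n hn a γ hγ]

lemma BD.M_restr_norm_le (B : BD Γ) {n : ℕ} (hn : 1 ≤ n) {z : Linf Γ}
    (hz : z ∈ B.M n) : ‖restr (B.Γs n) z‖ ≤ B.s n := by
  obtain ⟨a, hza, hsupp, hnorm, hval⟩ := B.M_wit hn n le_rfl z hz
  refine Linf.norm_le_of (B.s_nonneg n) fun γ => ?_
  by_cases hγ : γ ∈ B.Γs n
  · rw [restr_apply_mem hγ, hval γ hγ]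
    exact ((abs_ent_le _).trans (Linf.abs_le_norm a γ)).trans hnorm
  · rw [restr_apply_not_mem hγ]
    simpa using B.s_nonneg n

/-- Witness form for points of `C n`. -/
lemma BD.C_wit (B : BD Γ) {n : ℕ} (hn : 1 ≤ n) {z : Linf Γ} (hz : z ∈ B.C n) :
    IsIntVal (restr (B.Γs n) z) ∧
    B.s n < ‖restr (B.Γs n) z‖ ∧ ‖restr (B.Γs n) z‖ ≤ B.s (n + 1) ∧
    z = quant (B.i (n + 1) (quant (trunc (B.s (n + 1))
      (restr (B.Γs (n + 1)) (B.i n (restr (B.Γs n) z)))))) := by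
  obtain ⟨z₀, hz₀, rfl⟩ := hz
  obtain ⟨hz₀1, hz₀2⟩ := hz₀
  obtain ⟨w, hw, rfl⟩ := hz₀1
  have hint : IsIntVal (quant w) := isIntVal_quant w
  have hsupp : ∀ γ ∉ B.Γs n, quant w γ = 0 := fun γ hγ => by
    rw [quant_apply, hw.1 γ hγ, ent_zero']
  have hnorm : ‖quant w‖ ≤ B.s (n + 1) := (norm_quant_le w).trans hw.2
  -- key: the restriction recovers quant w
  have hrestr : restr (B.Γs n)
      (quant (B.i (n + 1) (quant (trunc (B.s (n + 1))
        (restr (B.Γs (n + 1)) (B.i n (quant w))))))) = quant w := by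
    ext γ
    by_cases hγ : γ ∈ B.Γs n
    · have hγ' : γ ∈ B.Γs (n + 1) := (B.ssubset n hn).subset hγ
      rw [restr_apply_mem hγ, quant_apply,
        B.extension (n + 1) (by omega) _ γ hγ', quant_apply, trunc_apply,
        restr_apply_mem hγ', B.extension n hn _ γ hγ]
      obtain ⟨k, hk⟩ := hint γ
      have habs : |quant w γ| ≤ B.s (n + 1) :=
        (Linf.abs_le_norm _ γ).trans hnorm
      rw [truncFun_eq_self' habs, hk, ent_intCast, ent_intCast]
    · rw [restr_apply_not_mem hγ]
      exact (hsupp γ hγ).symm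
  refine ⟨by rw [hrestr]; exact hint, ?_, by rw [hrestr]; exact hnorm, by rw [hrestr]⟩
  · rw [hrestr]
    by_contra hc
    push_neg at hc
    exact hz₀2 ⟨quant w, ⟨hsupp, hc⟩, quant_eq_self hint⟩

lemma BD.isIntVal_of_mem_D (B : BD Γ) {n : ℕ} (hn : 1 ≤ n) {z : Linf Γ}
    (hz : z ∈ B.D n) : IsIntVal z := by
  rcases hz with hz | hz
  · obtain ⟨a, rfl, -⟩ := B.M_wit hn n le_rfl z hz
    exact isIntVal_quant _
  · obtain ⟨-, -, -, hzF⟩ := B.C_wit hn hz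
    rw [hzF]; exact isIntVal_quant _

end BDAux
section PairAux

variable {Γ : Type*} [TopologicalSpace Γ] [DiscreteTopology Γ]

lemma BD.pair_MM (B : BD Γ) {n : ℕ} (hn : 1 ≤ n) {z z' : Linf Γ}
    (hz : z ∈ B.M n) (hz' : z' ∈ B.M n) :
    ‖z - z'‖ ≤ (B.lam : ℝ) * ‖restr (B.Γs n) z - restr (B.Γs n) z'‖ +
      (2 * (B.lam : ℝ) + 2) := by
  obtain ⟨a, rfl, hsupp, hnorm, hval⟩ := B.M_wit hn n le_rfl z hz
  obtain ⟨a', rfl, hsupp', hnorm', hval'⟩ := B.M_wit hn n le_rfl z' hz'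
  set d := ‖restr (B.Γs n) (quant (B.i n a)) - restr (B.Γs n) (quant (B.i n a'))‖
    with hd
  have hd0 : 0 ≤ d := norm_nonneg _
  have haa' : ‖a - a'‖ ≤ d + 2 := by
    refine Linf.norm_le_of (by linarith) fun γ => ?_
    rw [BoundedContinuousFunction.sub_apply]
    by_cases hγ : γ ∈ B.Γs n
    · have h1 := abs_le.mp (abs_ent_sub_le (a γ))
      have h2 := abs_le.mp (abs_ent_sub_le (a' γ))
      have h3 : |ent (a γ) - ent (a' γ)| ≤ d := by
        have : ent (a γ) - ent (a' γ) =
            (restr (B.Γs n) (quant (B.i n a)) -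
              restr (B.Γs n) (quant (B.i n a'))) γ := by
          rw [BoundedContinuousFunction.sub_apply, restr_apply_mem hγ,
            restr_apply_mem hγ, ← hval γ hγ, ← hval' γ hγ]
        rw [this]
        exact Linf.abs_le_norm _ γ
      have h3' := abs_le.mp h3
      rw [abs_le]; constructor <;> linarith
    · rw [hsupp γ hγ, hsupp' γ hγ]
      simpa using by linarith
  calc ‖quant (B.i n a) - quant (B.i n a')‖
      ≤ ‖B.i n a - B.i n a'‖ + 2 := norm_quant_sub_quant _ _
    _ = ‖B.i n (a - a')‖ + 2 := by rw [map_sub]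
    _ ≤ (B.lam : ℝ) * ‖a - a'‖ + 2 := by
        linarith [B.norm_i_apply_le hn (a - a')]
    _ ≤ (B.lam : ℝ) * (d + 2) + 2 := by
        have := B.lam_one_le
        nlinarith
    _ = (B.lam : ℝ) * d + (2 * (B.lam : ℝ) + 2) := by ring

lemma BD.pair_CC (B : BD Γ) {n : ℕ} (hn : 1 ≤ n) {z z' : Linf Γ}
    (hz : z ∈ B.C n) (hz' : z' ∈ B.C n) :
    ‖z - z'‖ ≤ (B.lam : ℝ) ^ 2 * ‖restr (B.Γs n) z - restr (B.Γs n) z'‖ +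
      (2 * (B.lam : ℝ) + 2) := by
  obtain ⟨hint, hlt, hle, hzF⟩ := B.C_wit hn hz
  obtain ⟨hint', hlt', hle', hzF'⟩ := B.C_wit hn hz'
  set z₀ := restr (B.Γs n) z with hz₀
  set z₀' := restr (B.Γs n) z' with hz₀'
  set d := ‖z₀ - z₀'‖ with hd
  have hd0 : 0 ≤ d := norm_nonneg _
  have hlam := B.lam_one_le
  set u := quant (trunc (B.s (n + 1)) (restr (B.Γs (n + 1)) (B.i n z₀))) with hu
  set u' := quant (trunc (B.s (n + 1)) (restr (B.Γs (n + 1)) (B.i n z₀'))) with hu'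
  have huu' : ‖u - u'‖ ≤ (B.lam : ℝ) * d + 2 := by
    refine Linf.norm_le_of (by nlinarith) fun γ => ?_
    rw [BoundedContinuousFunction.sub_apply, hu, hu', quant_apply, quant_apply,
      trunc_apply, trunc_apply]
    refine (abs_ent_sub_ent _ _).trans (add_le_add_left ?_ 2)
    refine (truncFun_lip (B.s_nonneg (n + 1)) _ _).trans ?_
    by_cases hγ : γ ∈ B.Γs (n + 1)
    · rw [restr_apply_mem hγ, restr_apply_mem hγ]
      calc |B.i n z₀ γ - B.i n z₀' γ| = |B.i n (z₀ - z₀') γ| := by rw [map_sub,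
            BoundedContinuousFunction.sub_apply]
        _ ≤ ‖B.i n (z₀ - z₀')‖ := Linf.abs_le_norm _ γ
        _ ≤ (B.lam : ℝ) * d := B.norm_i_apply_le hn _
    · rw [restr_apply_not_mem hγ, restr_apply_not_mem hγ]
      simpa using by nlinarith
  calc ‖z - z'‖ = ‖quant (B.i (n + 1) u) - quant (B.i (n + 1) u')‖ := by
        rw [← hzF, ← hzF']
    _ ≤ ‖B.i (n + 1) u - B.i (n + 1) u'‖ + 2 := norm_quant_sub_quant _ _
    _ = ‖B.i (n + 1) (u - u')‖ + 2 := by rw [map_sub]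
    _ ≤ (B.lam : ℝ) * ‖u - u'‖ + 2 := by
        linarith [B.norm_i_apply_le (by omega : 1 ≤ n + 1) (u - u')]
    _ ≤ (B.lam : ℝ) * ((B.lam : ℝ) * d + 2) + 2 := by nlinarith
    _ = (B.lam : ℝ) ^ 2 * d + (2 * (B.lam : ℝ) + 2) := by ring

lemma BD.pair_MC (B : BD Γ) {n : ℕ} (hn : 1 ≤ n) {z z' : Linf Γ}
    (hz : z ∈ B.M n) (hz' : z' ∈ B.C n) :
    ‖z - z'‖ ≤ (B.lam : ℝ) ^ 2 * ‖restr (B.Γs n) z - restr (B.Γs n) z'‖ +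
      ((B.lam : ℝ) ^ 2 + (B.lam : ℝ) + 2) := by
  obtain ⟨a, hzq, hsupp, hnorm, hval⟩ := B.M_wit hn n le_rfl z hz
  obtain ⟨hint', hlt', hle', hzF'⟩ := B.C_wit hn hz'
  set z₀' := restr (B.Γs n) z' with hz₀'
  set d := ‖restr (B.Γs n) z - z₀'‖ with hd
  have hd0 : 0 ≤ d := norm_nonneg _
  have hlam := B.lam_one_le
  have hlam0 : (0 : ℝ) ≤ (B.lam : ℝ) := by linarith
  set u' := quant (trunc (B.s (n + 1)) (restr (B.Γs (n + 1)) (B.i n z₀'))) with hu'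
  set b := restr (B.Γs (n + 1)) (B.i n a) with hb
  have hib : B.i (n + 1) b = B.i n a := B.compatible n (n + 1) hn (by omega) a
  -- ‖a - z₀'‖ ≤ d + 1
  have haz : ‖a - z₀'‖ ≤ d + 1 := by
    refine Linf.norm_le_of (by linarith) fun γ => ?_
    rw [BoundedContinuousFunction.sub_apply]
    by_cases hγ : γ ∈ B.Γs n
    · have h1 := abs_le.mp (abs_ent_sub_le (a γ))
      have h2 : |ent (a γ) - z₀' γ| ≤ d := by
        have : ent (a γ) - z₀' γ = (restr (B.Γs n) z - z₀') γ := by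
          rw [BoundedContinuousFunction.sub_apply, restr_apply_mem hγ z,
            ← hval γ hγ]
        rw [this]; exact Linf.abs_le_norm _ γ
      have h2' := abs_le.mp h2
      rw [abs_le]; constructor <;> linarith
    · rw [hsupp γ hγ, hz₀', restr_apply_not_mem hγ]
      simpa using by linarith
  -- ‖a‖ ≤ s n gives |i n a γ| ≤ s (n+1)
  have hia_bound : ∀ γ, |B.i n a γ| ≤ B.s (n + 1) := by
    intro γ
    calc |B.i n a γ| ≤ ‖B.i n a‖ := Linf.abs_le_norm _ γ
      _ ≤ (B.lam : ℝ) * ‖a‖ := B.norm_i_apply_le hn a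
      _ ≤ (B.lam : ℝ) * B.s n := mul_le_mul_of_nonneg_left hnorm hlam0
      _ = B.s (n + 1) := (B.s_succ n).symm
  have hbu : ‖b - u'‖ ≤ (B.lam : ℝ) * (d + 1) + 1 := by
    refine Linf.norm_le_of (by nlinarith) fun γ => ?_
    rw [BoundedContinuousFunction.sub_apply, hb, hu', quant_apply, trunc_apply]
    by_cases hγ : γ ∈ B.Γs (n + 1)
    · rw [restr_apply_mem hγ, restr_apply_mem hγ]
      have e1 : B.i n a γ = truncFun (B.s (n + 1)) (B.i n a γ) :=
        (truncFun_eq_self' (hia_bound γ)).symm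
      have h1 := abs_le.mp (abs_ent_sub_le (truncFun (B.s (n + 1)) (B.i n z₀' γ)))
      have h2 : |truncFun (B.s (n + 1)) (B.i n a γ) -
          truncFun (B.s (n + 1)) (B.i n z₀' γ)| ≤ (B.lam : ℝ) * (d + 1) := by
        refine (truncFun_lip (B.s_nonneg (n + 1)) _ _).trans ?_
        calc |B.i n a γ - B.i n z₀' γ| = |B.i n (a - z₀') γ| := by
              rw [map_sub, BoundedContinuousFunction.sub_apply]
          _ ≤ ‖B.i n (a - z₀')‖ := Linf.abs_le_norm _ γ
          _ ≤ (B.lam : ℝ) * ‖a - z₀'‖ := B.norm_i_apply_le hn _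
          _ ≤ (B.lam : ℝ) * (d + 1) := mul_le_mul_of_nonneg_left haz hlam0
      have h2' := abs_le.mp h2
      rw [e1, abs_le]; constructor <;> linarith
    · rw [restr_apply_not_mem hγ, restr_apply_not_mem hγ,
        truncFun_zero' (B.s_nonneg (n + 1)), ent_zero']
      simpa using by nlinarith
  calc ‖z - z'‖ = ‖quant (B.i (n + 1) b) - quant (B.i (n + 1) u')‖ := by
        rw [hib, ← hzq, ← hzF']
    _ ≤ ‖B.i (n + 1) b - B.i (n + 1) u'‖ + 2 := norm_quant_sub_quant _ _
    _ = ‖B.i (n + 1) (b - u')‖ + 2 := by rw [map_sub]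
    _ ≤ (B.lam : ℝ) * ‖b - u'‖ + 2 := by
        linarith [B.norm_i_apply_le (by omega : 1 ≤ n + 1) (b - u')]
    _ ≤ (B.lam : ℝ) * ((B.lam : ℝ) * (d + 1) + 1) + 2 := by nlinarith
    _ = (B.lam : ℝ) ^ 2 * d + ((B.lam : ℝ) ^ 2 + (B.lam : ℝ) + 2) := by ring

lemma BD.pair_bound (B : BD Γ) {n : ℕ} (hn : 1 ≤ n) {z z' : Linf Γ}
    (hz : z ∈ B.D n) (hz' : z' ∈ B.D n) :
    ‖z - z'‖ ≤ (B.lam : ℝ) ^ 2 * ‖restr (B.Γs n) z - restr (B.Γs n) z'‖ +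
      ((B.lam : ℝ) ^ 2 + (B.lam : ℝ) + 2) := by
  have hlam := B.lam_one_le
  have hd0 : (0 : ℝ) ≤ ‖restr (B.Γs n) z - restr (B.Γs n) z'‖ := norm_nonneg _
  have h1 : (B.lam : ℝ) ≤ (B.lam : ℝ) ^ 2 := by nlinarith
  have h2 : (B.lam : ℝ) * ‖restr (B.Γs n) z - restr (B.Γs n) z'‖ ≤
      (B.lam : ℝ) ^ 2 * ‖restr (B.Γs n) z - restr (B.Γs n) z'‖ :=
    mul_le_mul_of_nonneg_right h1 hd0
  rcases hz with hz | hz <;> rcases hz' with hz' | hz'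
  · have := B.pair_MM hn hz hz'
    linarith
  · have := B.pair_MC hn hz hz'
    linarith
  · have := B.pair_MC hn hz' hz
    rw [norm_sub_rev z z', norm_sub_rev (restr (B.Γs n) z)]
    rw [norm_sub_rev (restr (B.Γs n) z)] at h2
    linarith
  · have := B.pair_CC hn hz hz'
    linarith

end PairAux
section ChainAux

variable {α : Type*}

lemma chain_self (T : ℕ → α → α) (a : ℕ) : chain T a a = id := by
  unfold chain; rw [Nat.sub_self]; rfl

lemma chain_peel (T : ℕ → α → α) {a b : ℕ} (h : a ≤ b) :
    chain T a (b + 1) = chain T a b ∘ T (b + 1) := by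
  have key : ∀ m : ℕ,
      (Nat.rec id (fun k ih => ih ∘ T (a + k + 1)) (m + 1) : α → α) =
      (Nat.rec id (fun k ih => ih ∘ T (a + k + 1)) m : α → α) ∘ T (a + m + 1) :=
    fun m => rfl
  unfold chain
  rw [Nat.succ_sub h, key, Nat.add_sub_cancel' h]

lemma chain_outer (T : ℕ → α → α) : ∀ {a b : ℕ}, a < b →
    chain T a b = T (a + 1) ∘ chain T (a + 1) b := by
  intro a b
  induction b with
  | zero => omega
  | succ m ih =>
    intro h
    rcases Nat.lt_or_ge a m with h' | h'
    · rw [chain_peel T (by omega : a ≤ m), ih h',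
        chain_peel T (by omega : a + 1 ≤ m)]
      rfl
    · have : a = m := by omega
      subst this
      rw [chain_peel T le_rfl, chain_self, chain_self]
      rfl

end ChainAux
/-- Proposition (Step 4): every `φ_{n,i}` is `(2λ²+4λ+4)`-Lipschitz on `D_n`. -/
theorem phi_ni_lipschitz (B : BD Γ) (n : ℕ) (hn : 1 ≤ n)
    (N : ℕ) (c : ℕ → Linf Γ)
    (hc_inj : Set.InjOn c (Set.Icc 1 N))
    (hc_range : c '' Set.Icc 1 N = B.C n)
    (hc_mono : ∀ i j, 1 ≤ i → i ≤ j → j ≤ N →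
      ‖restr (B.Γs n) (c i)‖ ≤ ‖restr (B.Γs n) (c j)‖)
    (T : ℕ → Linf Γ → Linf Γ)
    (hT_val : ∀ i, 1 ≤ i → i ≤ N → T i (c i) ∈ B.D n ∧
      restr (B.Γs n) (T i (c i)) =
        trunc (‖restr (B.Γs n) (c i)‖ - 1) (restr (B.Γs n) (c i)))
    (hT_id : ∀ i, 1 ≤ i → i ≤ N →
      ∀ z ∈ B.M n ∪ c '' Set.Icc 1 i, z ≠ c i → T i z = z)
    : ∀ i, i < N → ∀ x ∈ B.D n, ∀ y ∈ B.D n,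
      ‖chain T i N x - chain T i N y‖ ≤
        (2 * (B.lam : ℝ) ^ 2 + 4 * (B.lam : ℝ) + 4) * ‖x - y‖ := by
  intro i hi x hx y hy
  by_cases hxy : x = y
  · subst hxy; simp
  have hlam := B.lam_one_le
  have hlam0 : (0 : ℝ) ≤ (B.lam : ℝ) := by linarith
  have hsn1 : (1 : ℝ) ≤ B.s n := B.one_le_s n
  have hcC : ∀ j, 1 ≤ j → j ≤ N → c j ∈ B.C n := by
    intro j h1 h2
    rw [← hc_range]
    exact Set.mem_image_of_mem c (Set.mem_Icc.mpr ⟨h1, h2⟩)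
  -- The orbit lemma: structure of partial compositions of the `T j`.
  have orbit : ∀ z ∈ B.D n, ∀ k : ℕ, k ≤ N - i →
      (chain T (N - k) N z ∈ B.M n ∪ c '' Set.Icc 1 (N - k)) ∧
      ∃ e : ℝ, 0 ≤ e ∧
        restr (B.Γs n) (chain T (N - k) N z) = trunc e (restr (B.Γs n) z) ∧
        (e = ‖restr (B.Γs n) z‖ ∨
          ∃ j, N - k < j ∧ j ≤ N ∧ e = ‖restr (B.Γs n) (c j)‖ - 1) := by
    intro z hz k
    induction k with
    | zero =>
      intro _
      rw [Nat.sub_zero, chain_self]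
      refine ⟨?_, ‖restr (B.Γs n) z‖, norm_nonneg _,
        (trunc_eq_self le_rfl).symm, Or.inl rfl⟩
      rcases hz with h | h
      · exact Or.inl h
      · rw [← hc_range] at h
        exact Or.inr h
    | succ k ih =>
      intro hk1
      obtain ⟨hmem, e, he0, heq, hLB⟩ := ih (by omega)
      have ha : N - k = (N - (k + 1)) + 1 := by omega
      set a := N - (k + 1) with ha'
      rw [ha] at hmem heq hLB
      have haN : a < N := by omega
      have hchain : chain T a N z = T (a + 1) (chain T (a + 1) N z) := by
        rw [chain_outer T haN]; rfl
      by_cases hqc : chain T (a + 1) N z = c (a + 1)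
      · -- clamping step
        have hval := hT_val (a + 1) (by omega) (by omega)
        have hCmem : c (a + 1) ∈ B.C n := hcC (a + 1) (by omega) (by omega)
        have hMv1 : B.s n < ‖restr (B.Γs n) (c (a + 1))‖ := (B.C_wit hn hCmem).2.1
        have hMv0 : (0 : ℝ) ≤ ‖restr (B.Γs n) (c (a + 1))‖ - 1 := by linarith
        have harg : restr (B.Γs n) (c (a + 1)) = trunc e (restr (B.Γs n) z) := by
          rw [← hqc]; exact heq
        have hres : restr (B.Γs n) (chain T a N z)
            = trunc (min (‖restr (B.Γs n) (c (a + 1))‖ - 1) e)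
                (restr (B.Γs n) z) := by
          calc restr (B.Γs n) (chain T a N z)
              = restr (B.Γs n) (T (a + 1) (c (a + 1))) := by rw [hchain, hqc]
            _ = trunc (‖restr (B.Γs n) (c (a + 1))‖ - 1)
                  (restr (B.Γs n) (c (a + 1))) := hval.2
            _ = trunc (‖restr (B.Γs n) (c (a + 1))‖ - 1)
                  (trunc e (restr (B.Γs n) z)) :=
                congrArg (trunc (‖restr (B.Γs n) (c (a + 1))‖ - 1)) harg
            _ = trunc (min (‖restr (B.Γs n) (c (a + 1))‖ - 1) e)
                  (restr (B.Γs n) z) := trunc_trunc hMv0 he0 _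
        constructor
        · rw [hchain, hqc]
          rcases hval.1 with hD | hD
          · exact Or.inl hD
          · rw [← hc_range] at hD
            obtain ⟨k', hk', hck'⟩ := hD
            have hk'1 := hk'.1
            have hk'2 := hk'.2
            have hk'le : k' ≤ a := by
              by_contra hc'
              push_neg at hc'
              have h1 : ‖restr (B.Γs n) (c (a + 1))‖ ≤ ‖restr (B.Γs n) (c k')‖ :=
                hc_mono (a + 1) k' (by omega) (by omega) hk'2
              have h2 : ‖restr (B.Γs n) (c k')‖ ≤
                  ‖restr (B.Γs n) (c (a + 1))‖ - 1 := by
                rw [hck', hval.2]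
                exact norm_trunc_le hMv0 _
              linarith
            exact Or.inr ⟨k', Set.mem_Icc.mpr ⟨hk'1, hk'le⟩, hck'⟩
        · refine ⟨min (‖restr (B.Γs n) (c (a + 1))‖ - 1) e,
            le_min hMv0 he0, hres, ?_⟩
          rcases le_total (‖restr (B.Γs n) (c (a + 1))‖ - 1) e with h | h
          · exact Or.inr ⟨a + 1, by omega, by omega, min_eq_left h⟩
          · rw [min_eq_right h]
            rcases hLB with h' | ⟨j, hj1, hj2, hj3⟩
            · exact Or.inl h'
            · exact Or.inr ⟨j, by omega, hj2, hj3⟩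
      · -- identity step
        have hTq : T (a + 1) (chain T (a + 1) N z) = chain T (a + 1) N z :=
          hT_id (a + 1) (by omega) (by omega) _ hmem hqc
        have hc2 : chain T a N z = chain T (a + 1) N z := by rw [hchain, hTq]
        rw [hc2]
        constructor
        · rcases hmem with h | h
          · exact Or.inl h
          · obtain ⟨k', hk', hck'⟩ := h
            have hk'1 := hk'.1
            have hk'2 := hk'.2
            have hne : k' ≠ a + 1 := by
              intro hE
              exact hqc (by rw [← hck', hE])
            exact Or.inr ⟨k', Set.mem_Icc.mpr ⟨hk'1, by omega⟩, hck'⟩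
        · refine ⟨e, he0, heq, ?_⟩
          rcases hLB with h' | ⟨j, hj1, hj2, hj3⟩
          · exact Or.inl h'
          · exact Or.inr ⟨j, by omega, hj2, hj3⟩
  -- Per-point processing
  have hsnL : B.s n < ‖restr (B.Γs n) (c (i + 1))‖ :=
    (B.C_wit hn (hcC (i + 1) (by omega) (by omega))).2.1
  have key : ∀ z ∈ B.D n, ∃ ez : ℝ, 0 ≤ ez ∧
      restr (B.Γs n) (chain T i N z) = trunc ez (restr (B.Γs n) z) ∧
      min (‖restr (B.Γs n) (c (i + 1))‖ - 1) ‖restr (B.Γs n) z‖ ≤ ez ∧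
      ez ≤ min ‖restr (B.Γs n) (c (i + 1))‖ ‖restr (B.Γs n) z‖ ∧
      chain T i N z ∈ B.D n := by
    intro z hz
    have hNi : N - (N - i) = i := by omega
    obtain ⟨hmem, e, he0, heq, hLB⟩ := orbit z hz (N - i) le_rfl
    rw [hNi] at hmem heq hLB
    have hnz0 : (0 : ℝ) ≤ ‖restr (B.Γs n) z‖ := norm_nonneg _
    have he20 : (0 : ℝ) ≤ min e ‖restr (B.Γs n) z‖ := le_min he0 hnz0
    have hDmem : chain T i N z ∈ B.D n := by
      rcases hmem with h | h
      · exact Or.inl h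
      · refine Or.inr ?_
        rw [← hc_range]
        obtain ⟨k', hk', hck'⟩ := h
        have hk1 := hk'.1
        have hk2 := hk'.2
        exact ⟨k', Set.mem_Icc.mpr ⟨hk1, by omega⟩, hck'⟩
    have heq2 : restr (B.Γs n) (chain T i N z) =
        trunc (min e ‖restr (B.Γs n) z‖) (restr (B.Γs n) z) := by
      rw [heq, trunc_min_norm he0]
    refine ⟨min e ‖restr (B.Γs n) z‖, he20, heq2, ?_, ?_, hDmem⟩
    · rcases hLB with h | ⟨j, hj1, hj2, hj3⟩
      · rw [h, min_self]
        exact min_le_right _ _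
      · have hLj : ‖restr (B.Γs n) (c (i + 1))‖ ≤ ‖restr (B.Γs n) (c j)‖ :=
          hc_mono (i + 1) j (by omega) (by omega) hj2
        refine le_min ?_ (min_le_right _ _)
        calc min (‖restr (B.Γs n) (c (i + 1))‖ - 1) ‖restr (B.Γs n) z‖
            ≤ ‖restr (B.Γs n) (c (i + 1))‖ - 1 := min_le_left _ _
          _ ≤ e := by rw [hj3]; linarith
    · refine le_min ?_ (min_le_right _ _)
      have hnorm_eq : ‖restr (B.Γs n) (chain T i N z)‖ =
          min e ‖restr (B.Γs n) z‖ := by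
        rw [heq2, norm_trunc_eq he20 (min_le_right _ _)]
      rw [← hnorm_eq]
      rcases hmem with h | h
      · exact (B.M_restr_norm_le hn h).trans (le_of_lt hsnL)
      · obtain ⟨k', hk', hck'⟩ := h
        have hk1 := hk'.1
        have hk2 := hk'.2
        rw [← hck']
        exact hc_mono k' (i + 1) hk1 (by omega) (by omega)
  obtain ⟨ex, hex0, hexeq, hexlb, hexub, hpxD⟩ := key x hx
  obtain ⟨ey, hey0, heyeq, heylb, heyub, hpyD⟩ := key y hy
  have hsep : (1 : ℝ) ≤ ‖x - y‖ :=
    one_le_norm_sub (B.isIntVal_of_mem_D hn hx) (B.isIntVal_of_mem_D hn hy) hxy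
  have hd_le : ‖restr (B.Γs n) x - restr (B.Γs n) y‖ ≤ ‖x - y‖ := by
    rw [restr_sub]; exact norm_restr_le _ _
  have hnd : |‖restr (B.Γs n) x‖ - ‖restr (B.Γs n) y‖| ≤
      ‖restr (B.Γs n) x - restr (B.Γs n) y‖ := abs_norm_sub_norm_le _ _
  have hkey : ∀ u v nu nv : ℝ,
      min (‖restr (B.Γs n) (c (i + 1))‖ - 1) nu ≤ u →
      u ≤ min ‖restr (B.Γs n) (c (i + 1))‖ nu →
      min (‖restr (B.Γs n) (c (i + 1))‖ - 1) nv ≤ v →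
      v ≤ min ‖restr (B.Γs n) (c (i + 1))‖ nv →
      |nu - nv| ≤ ‖restr (B.Γs n) x - restr (B.Γs n) y‖ →
      v - u ≤ max ‖restr (B.Γs n) x - restr (B.Γs n) y‖ 1 := by
    intro u v nu nv h1 h2 h3 h4 h5
    have h5' := abs_le.mp h5
    rcases le_total nu (‖restr (B.Γs n) (c (i + 1))‖ - 1) with h6 | h6
    · have hu : u = nu := le_antisymm (h2.trans (min_le_right _ _))
        (by rwa [min_eq_right h6] at h1)
      rcases le_total nv ‖restr (B.Γs n) (c (i + 1))‖ with h7 | h7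
      · have hv : v ≤ nv := h4.trans (min_le_right _ _)
        refine le_trans ?_ (le_max_left _ _)
        linarith
      · have hv : v ≤ ‖restr (B.Γs n) (c (i + 1))‖ := h4.trans (min_le_left _ _)
        refine le_trans ?_ (le_max_left _ _)
        linarith
    · have hu : ‖restr (B.Γs n) (c (i + 1))‖ - 1 ≤ u := le_trans
        (by rw [min_eq_left h6]) h1
      have hv : v ≤ ‖restr (B.Γs n) (c (i + 1))‖ := h4.trans (min_le_left _ _)
      refine le_trans ?_ (le_max_right _ _)
      linarith
  have habs : |ey - ex| ≤ max ‖restr (B.Γs n) x - restr (B.Γs n) y‖ 1 := by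
    rw [abs_le]
    constructor
    · have := hkey ey ex ‖restr (B.Γs n) y‖ ‖restr (B.Γs n) x‖ heylb heyub
        hexlb hexub (by rw [abs_sub_comm]; exact hnd)
      linarith
    · exact hkey ex ey ‖restr (B.Γs n) x‖ ‖restr (B.Γs n) y‖ hexlb hexub
        heylb heyub hnd
  have hrho : ‖restr (B.Γs n) (chain T i N x) - restr (B.Γs n) (chain T i N y)‖ ≤
      max ‖restr (B.Γs n) x - restr (B.Γs n) y‖ 1 := by
    rw [hexeq, heyeq]
    refine (norm_trunc_sub_trunc hex0 hey0 _ _).trans (max_le ?_ ?_)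
    · exact le_max_left _ _
    · exact habs
  have hpair := B.pair_bound hn hpxD hpyD
  have hl2 : (0 : ℝ) ≤ (B.lam : ℝ) ^ 2 := by positivity
  have hmax : max ‖restr (B.Γs n) x - restr (B.Γs n) y‖ 1 ≤ ‖x - y‖ :=
    max_le hd_le hsep
  have hmul : (B.lam : ℝ) ^ 2 *
      ‖restr (B.Γs n) (chain T i N x) - restr (B.Γs n) (chain T i N y)‖ ≤
      (B.lam : ℝ) ^ 2 * ‖x - y‖ :=
    mul_le_mul_of_nonneg_left (hrho.trans hmax) hl2
  have hconst : (B.lam : ℝ) ^ 2 + (B.lam : ℝ) + 2 ≤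
      ((B.lam : ℝ) ^ 2 + (B.lam : ℝ) + 2) * ‖x - y‖ := by
    nlinarith
  have hfinal : ((B.lam : ℝ) ^ 2 + ((B.lam : ℝ) ^ 2 + (B.lam : ℝ) + 2)) * ‖x - y‖ ≤
      (2 * (B.lam : ℝ) ^ 2 + 4 * (B.lam : ℝ) + 4) * ‖x - y‖ := by
    have h0 : (0 : ℝ) ≤ ‖x - y‖ := norm_nonneg _
    nlinarith
  calc ‖chain T i N x - chain T i N y‖
      ≤ (B.lam : ℝ) ^ 2 *
          ‖restr (B.Γs n) (chain T i N x) - restr (B.Γs n) (chain T i N y)‖ +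
        ((B.lam : ℝ) ^ 2 + (B.lam : ℝ) + 2) := hpair
    _ ≤ (B.lam : ℝ) ^ 2 * ‖x - y‖ + ((B.lam : ℝ) ^ 2 + (B.lam : ℝ) + 2) * ‖x - y‖ :=
        by linarith
    _ = ((B.lam : ℝ) ^ 2 + ((B.lam : ℝ) ^ 2 + (B.lam : ℝ) + 2)) * ‖x - y‖ := by ring
    _ ≤ (2 * (B.lam : ℝ) ^ 2 + 4 * (B.lam : ℝ) + 4) * ‖x - y‖ := hfinal
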